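/- arXiv:2107.08102 — 4 statements merged into one kernel-verified Lean document; each statement's English description precedes it below -/
import Mathlib

section
/- Let n be a positive even integer, e an integer with n < e < 3n/2, and l_1,…,l_n nonnegative integers with Σ_{i=1}^{n} l_i = n(e − n − 1), and set Δ = 3n/2 − e and L_i = l_i + Δ for i = 1,…,n. If the PRN3DM instance (n, e, l_1,…,l_n) is a yes-instance (there exist a partition A, B of {1,…,n} into sets of size n/2 and bijections π_A : A → {1,…,n/2}, σ_A : A → {n/2+1,…,n}, π_B : B → {n/2+1,…,n}, σ_B : B → {1,…,n/2} with π_A(i) + l_i + σ_A(i) = e on A and π_B(i) + l_i + σ_B(i) = e on B), then there exists a feasible schedule s for the two-machine unit-time open shop with time lags L_1,…,L_n whose total completion time Σ_{i=1}^{n} C_i equals F = (n/2)(3n/2 + 1). -/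
lemma gauss_aux (t : ℕ) : (∑ j ∈ Finset.range t, (2*t - j)) * 2 = t * (3*t+1) := by
  rw [← Finset.sum_range_reflect]
  have h : ∀ j ∈ Finset.range t, 2*t - (t - 1 - j) = t + 1 + j := by
    intro j hj; rw [Finset.mem_range] at hj; omega
  rw [Finset.sum_congr rfl h, Finset.sum_add_distrib, Finset.sum_const, Finset.card_range,
    smul_eq_mul]
  have := Finset.sum_range_id_mul_two t
  rcases t with _ | m
  · simp
  · simp only [Nat.add_sub_cancel] at this
    ring_nf at this ⊢
    linarith

lemma icc_sum_aux (t : ℕ) : (∑ k ∈ Finset.Icc (t+1) (2*t), (3*t+1-k)) * 2 = t * (3*t+1) := by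
  rw [← gauss_aux t]
  congr 1
  refine Finset.sum_nbij' (fun k => k - (t+1)) (fun j => j + (t+1)) ?_ ?_ ?_ ?_ ?_
  · intro k hk; rw [Finset.mem_Icc] at hk; rw [Finset.mem_range]; omega
  · intro j hj; rw [Finset.mem_range] at hj; rw [Finset.mem_Icc]; omega
  · intro k hk; rw [Finset.mem_Icc] at hk; omega
  · intro j hj; rw [Finset.mem_range] at hj; omega
  · intro k hk; rw [Finset.mem_Icc] at hk; omega



/-- The PRN3DM instance `(n, e, l)` is a yes-instance: there is a partition of
`{1,…,n}` into `A` and `B` of size `n/2` each, and bijections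
`πA : A → {1,…,n/2}`, `σA : A → {n/2+1,…,n}`, `πB : B → {n/2+1,…,n}`,
`σB : B → {1,…,n/2}` with `πA i + l i + σA i = e` on `A` and
`πB i + l i + σB i = e` on `B`. -/
def PRN3DMYes (n e : ℕ) (l : ℕ → ℕ) : Prop :=
  ∃ (A B : Finset ℕ) (πA σA πB σB : ℕ → ℕ),
    Disjoint A B ∧ A ∪ B = Finset.Icc 1 n ∧
    A.card = n / 2 ∧ B.card = n / 2 ∧
    Set.BijOn πA ↑A ↑(Finset.Icc 1 (n / 2)) ∧
    Set.BijOn σA ↑A ↑(Finset.Icc (n / 2 + 1) n) ∧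
    Set.BijOn πB ↑B ↑(Finset.Icc (n / 2 + 1) n) ∧
    Set.BijOn σB ↑B ↑(Finset.Icc 1 (n / 2)) ∧
    (∀ i ∈ A, πA i + l i + σA i = e) ∧
    (∀ i ∈ B, πB i + l i + σB i = e)

/-- A feasible integer schedule for the two-machine unit-time open shop with
time lags `L` on jobs `{1,…,n}`: `s i m` is the start time of the operation of
job `i` on machine `m`; each machine processes at most one operation at a time
(injectivity of start times on each machine), and the later operation of a job
starts at least `L i + 1` after the earlier one starts (i.e. at least `L i`
after the earlier operation completes). -/
def FeasibleSchedule (n : ℕ) (L : ℕ → ℕ) (s : ℕ → Fin 2 → ℕ) : Prop :=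
  (∀ m : Fin 2, Set.InjOn (fun i => s i m) ↑(Finset.Icc 1 n)) ∧
  (∀ i ∈ Finset.Icc 1 n, s i 0 + L i + 1 ≤ s i 1 ∨ s i 1 + L i + 1 ≤ s i 0)

/-- The completion time `C i` of job `i`: its later unit-time operation's
start time plus one. -/
def completionTime (s : ℕ → Fin 2 → ℕ) (i : ℕ) : ℕ := max (s i 0) (s i 1) + 1

/-- If the PRN3DM instance is a yes-instance, then there is a feasible schedule
for the two-machine unit-time open shop with time lags `L i = l i + Δ` whose
total completion time equals `F = (n/2) * (3n/2 + 1)`. -/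
theorem stmt_2 (n e : ℕ) (l : ℕ → ℕ) (hn : 0 < n) (hne : Even n)
    (h1 : n < e) (h2 : e < 3 * n / 2)
    (hsum : ∑ i ∈ Finset.Icc 1 n, l i = n * (e - n - 1))
    (hyes : PRN3DMYes n e l) :
    ∃ s : ℕ → Fin 2 → ℕ,
      FeasibleSchedule n (fun i => l i + (3 * n / 2 - e)) s ∧
      ∑ i ∈ Finset.Icc 1 n, completionTime s i = n / 2 * (3 * n / 2 + 1) := by
  obtain ⟨A, B, πA, σA, πB, σB, hdisj, hunion, hcA, hcB, hπA, hσA, hπB, hσB, heqA, heqB⟩ := hyes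
  obtain ⟨t, ht⟩ := hne
  have ht2 : n / 2 = t := by omega
  have h3t : 3 * n / 2 = 3 * t := by omega
  set Δ := 3 * n / 2 - e with hΔ
  have hΔe : e + Δ = 3 * t := by omega
  classical
  set s : ℕ → Fin 2 → ℕ := fun i m =>
    if i ∈ A then (if m.val = 0 then πA i - 1 else πA i + l i + Δ)
    else (if m.val = 0 then σB i + l i + Δ else σB i - 1) with hs
  -- bounds
  have hπAb : ∀ i ∈ A, 1 ≤ πA i ∧ πA i ≤ t := by
    intro i hi
    have := hπA.mapsTo hi
    simp only [Finset.coe_Icc, Set.mem_Icc, ht2] at this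
    exact this
  have hσAb : ∀ i ∈ A, t + 1 ≤ σA i ∧ σA i ≤ 2 * t := by
    intro i hi
    have := hσA.mapsTo hi
    simp only [Finset.coe_Icc, Set.mem_Icc, ht2] at this
    omega
  have hπBb : ∀ i ∈ B, t + 1 ≤ πB i ∧ πB i ≤ 2 * t := by
    intro i hi
    have := hπB.mapsTo hi
    simp only [Finset.coe_Icc, Set.mem_Icc, ht2] at this
    omega
  have hσBb : ∀ i ∈ B, 1 ≤ σB i ∧ σB i ≤ t := by
    intro i hi
    have := hσB.mapsTo hi
    simp only [Finset.coe_Icc, Set.mem_Icc, ht2] at this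
    exact this
  have hA3t : ∀ i ∈ A, πA i + l i + Δ + σA i = 3 * t := by
    intro i hi; have := heqA i hi; omega
  have hB3t : ∀ i ∈ B, πB i + (σB i + l i + Δ) = 3 * t := by
    intro i hi; have := heqB i hi; omega
  have hmem : ∀ i ∈ Finset.Icc 1 n, i ∈ A ∨ i ∈ B := by
    intro i hi
    rw [← hunion, Finset.mem_union] at hi
    exact hi
  have hsA0 : ∀ i ∈ A, s i 0 = πA i - 1 := by intro i hi; simp [hs, hi]
  have hsA1 : ∀ i ∈ A, s i 1 = πA i + l i + Δ := by intro i hi; simp [hs, hi]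
  have hsB0 : ∀ i ∈ B, s i 0 = σB i + l i + Δ := by
    intro i hi
    have hiA : i ∉ A := Finset.disjoint_left.mp hdisj.symm hi
    simp [hs, hiA]
  have hsB1 : ∀ i ∈ B, s i 1 = σB i - 1 := by
    intro i hi
    have hiA : i ∉ A := Finset.disjoint_left.mp hdisj.symm hi
    simp [hs, hiA]
  refine ⟨s, ⟨?_, ?_⟩, ?_⟩
  · -- injectivity
    intro m i hi j hj hij
    simp only [Finset.mem_coe] at hi hj
    rcases hmem i hi with hiA | hiB <;> rcases hmem j hj with hjA | hjB <;>
      fin_cases m <;> simp only at hij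
    · replace hij : s i 0 = s j 0 := hij
      rw [hsA0 i hiA, hsA0 j hjA] at hij
      have h1 := hπAb i hiA; have h2 := hπAb j hjA
      exact hπA.injOn hiA hjA (by omega)
    · replace hij : s i 1 = s j 1 := hij
      rw [hsA1 i hiA, hsA1 j hjA] at hij
      have h1 := hA3t i hiA; have h2 := hA3t j hjA
      exact hσA.injOn hiA hjA (by omega)
    · replace hij : s i 0 = s j 0 := hij
      rw [hsA0 i hiA, hsB0 j hjB] at hij
      have h1 := hπAb i hiA; have h2 := hB3t j hjB; have h3 := hπBb j hjB
      omega
    · replace hij : s i 1 = s j 1 := hij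
      rw [hsA1 i hiA, hsB1 j hjB] at hij
      have h1 := hA3t i hiA; have h2 := hσAb i hiA; have h3 := hσBb j hjB
      omega
    · replace hij : s i 0 = s j 0 := hij
      rw [hsB0 i hiB, hsA0 j hjA] at hij
      have h1 := hπAb j hjA; have h2 := hB3t i hiB; have h3 := hπBb i hiB
      omega
    · replace hij : s i 1 = s j 1 := hij
      rw [hsB1 i hiB, hsA1 j hjA] at hij
      have h1 := hA3t j hjA; have h2 := hσAb j hjA; have h3 := hσBb i hiB
      omega
    · replace hij : s i 0 = s j 0 := hij
      rw [hsB0 i hiB, hsB0 j hjB] at hij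
      have h1 := hB3t i hiB; have h2 := hB3t j hjB
      exact hπB.injOn hiB hjB (by omega)
    · replace hij : s i 1 = s j 1 := hij
      rw [hsB1 i hiB, hsB1 j hjB] at hij
      have h1 := hσBb i hiB; have h2 := hσBb j hjB
      exact hσB.injOn hiB hjB (by omega)
  · -- time lags
    intro i hi
    rcases hmem i hi with hiA | hiB
    · left
      simp only [hsA0 i hiA, hsA1 i hiA]
      have := hπAb i hiA
      omega
    · right
      simp only [hsB0 i hiB, hsB1 i hiB]
      have := hσBb i hiB
      omega
  · -- total completion time
    have hcompA : ∀ i ∈ A, completionTime s i = 3 * t + 1 - σA i := by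
      intro i hi
      rw [completionTime, hsA0 i hi, hsA1 i hi]
      have h1 := hA3t i hi; have h2 := hσAb i hi; have h3 := hπAb i hi
      omega
    have hcompB : ∀ i ∈ B, completionTime s i = 3 * t + 1 - πB i := by
      intro i hi
      rw [completionTime, hsB0 i hi, hsB1 i hi]
      have h1 := hB3t i hi; have h2 := hπBb i hi; have h3 := hσBb i hi
      omega
    rw [← hunion, Finset.sum_union hdisj]
    have hSA : ∑ i ∈ A, completionTime s i = ∑ k ∈ Finset.Icc (t+1) (2*t), (3*t+1-k) := by
      refine Finset.sum_bij (fun a _ => σA a) ?_ ?_ ?_ ?_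
      · intro a ha
        have := hσA.mapsTo ha
        simp only [Finset.coe_Icc, Set.mem_Icc, ht2] at this
        simp only [Finset.mem_Icc]; omega
      · intro a ha b hb hab
        exact hσA.injOn ha hb hab
      · intro b hb
        rw [Finset.mem_Icc] at hb
        have hbmem : b ∈ (↑(Finset.Icc (n/2+1) n) : Set ℕ) := by
          simp only [Finset.coe_Icc, Set.mem_Icc, ht2]; omega
        obtain ⟨a, ha, hab⟩ := hσA.surjOn hbmem
        exact ⟨a, ha, hab⟩
      · intro a ha
        exact hcompA a ha
    have hSB : ∑ i ∈ B, completionTime s i = ∑ k ∈ Finset.Icc (t+1) (2*t), (3*t+1-k) := by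
      refine Finset.sum_bij (fun a _ => πB a) ?_ ?_ ?_ ?_
      · intro a ha
        have := hπB.mapsTo ha
        simp only [Finset.coe_Icc, Set.mem_Icc, ht2] at this
        simp only [Finset.mem_Icc]; omega
      · intro a ha b hb hab
        exact hπB.injOn ha hb hab
      · intro b hb
        rw [Finset.mem_Icc] at hb
        have hbmem : b ∈ (↑(Finset.Icc (n/2+1) n) : Set ℕ) := by
          simp only [Finset.coe_Icc, Set.mem_Icc, ht2]; omega
        obtain ⟨a, ha, hab⟩ := hπB.surjOn hbmem
        exact ⟨a, ha, hab⟩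
      · intro a ha
        exact hcompB a ha
    rw [hSA, hSB, ht2, h3t]
    have := icc_sum_aux t
    omega
end

section
/- Let m be a positive integer and let x_1 ≤ x_2 ≤ … ≤ x_{2m} be positive integers such that no value occurs more than twice among x_1,…,x_{2m}. If Σ_{k=1}^{2m} x_k ≤ m(m+1), then x_{2i−1} = x_{2i} = i for every i = 1,…,m; in particular the multiset {x_1,…,x_{2m}} equals {1,1,2,2,…,m,m}. -/
lemma sum_ceilhalf (m : ℕ) : ∑ k ∈ Finset.Icc 1 (2*m), (k+1)/2 = m*(m+1) := by
  induction m with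
  | zero => simp
  | succ m ih =>
    have h1 : 2*(m+1) = (2*m+1)+1 := by ring
    rw [h1, Finset.sum_Icc_succ_top (by omega), Finset.sum_Icc_succ_top (by omega), ih]
    have d1 : (2*m+1+1)/2 = m+1 := by omega
    have d2 : (2*m+1+1+1)/2 = m+1 := by omega
    rw [d1, d2]; ring

lemma map_eq_two_smul (m : ℕ) (x : ℕ → ℕ)
    (hx : ∀ k ∈ Finset.Icc 1 (2*m), x k = (k+1)/2) :
    (Finset.Icc 1 (2*m)).val.map x = 2 • (Finset.Icc 1 m).val := by
  induction m with
  | zero => simp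
  | succ m ih =>
    have h1 : 2*(m+1) = (2*m+1)+1 := by ring
    have e1 : Finset.Icc 1 (2*(m+1)) = insert ((2*m+1)+1) (Finset.Icc 1 (2*m+1)) := by
      ext j; simp [h1]; omega
    have e2 : Finset.Icc 1 (2*m+1) = insert (2*m+1) (Finset.Icc 1 (2*m)) := by
      ext j; simp; omega
    have e3 : Finset.Icc 1 (m+1) = insert (m+1) (Finset.Icc 1 m) := by
      ext j; simp; omega
    have hv1 : x (2*m+1) = m+1 := by
      rw [hx (2*m+1) (by simp)]; omega
    have hv2 : x (2*m+2) = m+1 := by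
      rw [hx (2*m+2) (by simp; omega)]; omega
    have hni1 : (2*m+1)+1 ∉ Finset.Icc 1 (2*m+1) := by simp
    have hni2 : (2*m+1) ∉ Finset.Icc 1 (2*m) := by simp
    have hni3 : (m+1) ∉ Finset.Icc 1 m := by simp
    rw [e1, Finset.insert_val_of_notMem hni1, e2, Finset.insert_val_of_notMem hni2,
      e3, Finset.insert_val_of_notMem hni3, Multiset.map_cons, Multiset.map_cons]
    have : (Finset.Icc 1 (2*m)).val.map x = 2 • (Finset.Icc 1 m).val := by
      apply ih; intro k hk; exact hx k (by simp at hk ⊢; omega)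
    rw [this, hv1]
    show x (2*m+1+1) ::ₘ _ = _
    rw [show 2*m+1+1 = 2*m+2 from rfl, hv2]
    have : ∀ (s : Multiset ℕ) (a : ℕ), 2 • (a ::ₘ s) = a ::ₘ a ::ₘ 2 • s := by
      intro s a
      rw [two_nsmul, two_nsmul, Multiset.cons_add, Multiset.add_cons]
    rw [this]

/-- Exchange argument: if `x 1 ≤ x 2 ≤ … ≤ x (2m)` are positive integers, no
value occurring more than twice, and their sum is at most `m * (m + 1)`, then
`x (2i-1) = x (2i) = i` for each `i = 1, …, m`. -/
theorem stmt_3 (m : ℕ) (hm : 0 < m) (x : ℕ → ℕ)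
    (hpos : ∀ k ∈ Finset.Icc 1 (2 * m), 0 < x k)
    (hmono : ∀ j ∈ Finset.Icc 1 (2 * m), ∀ k ∈ Finset.Icc 1 (2 * m),
      j ≤ k → x j ≤ x k)
    (htwice : ∀ v : ℕ,
      ((Finset.Icc 1 (2 * m)).filter (fun k => x k = v)).card ≤ 2)
    (hsum : ∑ k ∈ Finset.Icc 1 (2 * m), x k ≤ m * (m + 1)) :
    (∀ i ∈ Finset.Icc 1 m, x (2 * i - 1) = i ∧ x (2 * i) = i) ∧
    (Finset.Icc 1 (2 * m)).val.map x = 2 • (Finset.Icc 1 m).val := by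
  -- pigeonhole lower bound: k ≤ 2 * x k
  have hlow : ∀ k ∈ Finset.Icc 1 (2 * m), (k + 1) / 2 ≤ x k := by
    intro k hk
    have hsub : Finset.Icc 1 k ⊆
        (Finset.Icc 1 (x k)).biUnion
          (fun v => (Finset.Icc 1 (2 * m)).filter (fun j => x j = v)) := by
      intro j hj
      simp only [Finset.mem_Icc] at hj hk
      rw [Finset.mem_biUnion]
      refine ⟨x j, ?_, ?_⟩
      · rw [Finset.mem_Icc]
        exact ⟨hpos j (by simp; omega), hmono j (by simp; omega) k (by simp; omega) hj.2⟩
      · exact Finset.mem_filter.mpr ⟨Finset.mem_Icc.mpr ⟨hj.1, by omega⟩, rfl⟩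
    have hcard := Finset.card_le_card hsub
    have hbi : ((Finset.Icc 1 (x k)).biUnion
          (fun v => (Finset.Icc 1 (2 * m)).filter (fun j => x j = v))).card
        ≤ ∑ v ∈ Finset.Icc 1 (x k), 2 := by
      refine le_trans (Finset.card_biUnion_le) ?_
      exact Finset.sum_le_sum fun v _ => htwice v
    simp only [Nat.card_Icc, Finset.sum_const, smul_eq_mul] at hcard hbi
    omega
  have hsumlow := sum_ceilhalf m
  have hle : ∑ k ∈ Finset.Icc 1 (2 * m), (k + 1) / 2 ≤ ∑ k ∈ Finset.Icc 1 (2 * m), x k :=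
    Finset.sum_le_sum hlow
  have heq : ∀ k ∈ Finset.Icc 1 (2 * m), x k = (k + 1) / 2 := by
    have hsums : ∑ k ∈ Finset.Icc 1 (2 * m), (k + 1) / 2 = ∑ k ∈ Finset.Icc 1 (2 * m), x k := by
      omega
    intro k hk
    exact ((Finset.sum_eq_sum_iff_of_le hlow).mp hsums k hk).symm
  constructor
  · intro i hi
    simp only [Finset.mem_Icc] at hi
    constructor
    · rw [heq (2 * i - 1) (by simp; omega)]; omega
    · rw [heq (2 * i) (by simp; omega)]; omega
  · exact map_eq_two_smul m x heq
end

section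
/- Let n be a positive even integer, e an integer with n < e < 3n/2, and l_1,…,l_n nonnegative integers with Σ_{i=1}^{n} l_i = n(e − n − 1); set Δ = 3n/2 − e, L_i = l_i + Δ, and F = (n/2)(3n/2 + 1). Let s be any feasible schedule for the two-machine unit-time open shop with time lags L_1,…,L_n whose total completion time satisfies Σ_{i=1}^{n} C_i ≤ F. Then: (a) the multiset of earlier-operation completion times {min(s(i,1), s(i,2)) + 1 : i = 1,…,n} equals {1,1,2,2,…,n/2,n/2}; (b) the multiset of job completion times {C_i : i = 1,…,n} equals {n/2+1, n/2+1, n/2+2, n/2+2, …, n, n}; in particular every job completes after time n/2, the makespan max_i C_i equals n, and Σ_{i=1}^{n} C_i = F. -/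
lemma my_sum_range_le (k : ℕ) : ∀ T : Finset ℕ, T.card = k →
    ((∑ i ∈ Finset.range k, i) ≤ ∑ x ∈ T, x ∧
      ((∑ x ∈ T, x) = (∑ i ∈ Finset.range k, i) → T = Finset.range k)) := by
  induction k with
  | zero =>
    intro T hT
    rw [Finset.card_eq_zero] at hT
    subst hT; simp
  | succ k ih =>
    intro T hT
    have hne : T.Nonempty := Finset.card_pos.mp (by omega)
    have hMem : T.max' hne ∈ T := T.max'_mem hne
    set M := T.max' hne with hM
    have hTsub : T ⊆ Finset.range (M + 1) := by
      intro x hx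
      exact Finset.mem_range.mpr (Nat.lt_succ_of_le (T.le_max' x hx))
    have hcard : k + 1 ≤ M + 1 := by
      have := Finset.card_le_card hTsub
      rw [hT, Finset.card_range] at this; exact this
    have hE : (T.erase M).card = k := by
      rw [Finset.card_erase_of_mem hMem, hT]
      omega
    obtain ⟨ih1, ih2⟩ := ih (T.erase M) hE
    have hsumT : (∑ x ∈ T.erase M, x) + M = ∑ x ∈ T, x :=
      Finset.sum_erase_add T _ hMem
    have hrs : ∑ i ∈ Finset.range (k + 1), i = (∑ i ∈ Finset.range k, i) + k :=
      Finset.sum_range_succ _ _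
    constructor
    · omega
    · intro heq
      have hMk : M = k ∧ (∑ x ∈ T.erase M, x) = ∑ i ∈ Finset.range k, i := by omega
      have hTe := ih2 hMk.2
      rw [Finset.range_add_one, ← hTe, ← hMk.1]
      exact (Finset.insert_erase hMem).symm

lemma my_minmax_map (f g : ℕ → ℕ) (T : Multiset ℕ) :
    T.map (fun i => min (f i) (g i)) + T.map (fun i => max (f i) (g i)) =
      T.map f + T.map g := by
  induction T using Multiset.induction_on with
  | empty => simp
  | cons a T ih =>
    simp only [Multiset.map_cons, Multiset.cons_add, Multiset.add_cons] at *
    rcases le_total (f a) (g a) with h | h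
    · rw [min_eq_left h, max_eq_right h, ih]
    · rw [min_eq_right h, max_eq_left h, ih, Multiset.cons_swap]

lemma my_count_Ico (a b v : ℕ) :
    (Multiset.Ico a b).count v = if a ≤ v ∧ v < b then 1 else 0 := by
  rw [Multiset.count_eq_of_nodup Multiset.nodup_Ico]
  simp [Multiset.mem_Ico]

/-- Structure of any feasible schedule meeting the threshold `F`: the earlier
operation completion times form the multiset `{1,1,…,n/2,n/2}`, the job
completion times form the multiset `{n/2+1, n/2+1, …, n, n}`; in particular
every job completes after time `n/2`, the makespan is `n`, and the total
completion time equals `F`. -/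
theorem stmt_4 (n e : ℕ) (l : ℕ → ℕ) (hn : 0 < n) (hne : Even n)
    (h1 : n < e) (h2 : e < 3 * n / 2)
    (hsum : ∑ i ∈ Finset.Icc 1 n, l i = n * (e - n - 1))
    (s : ℕ → Fin 2 → ℕ)
    (hfeas : FeasibleSchedule n (fun i => l i + (3 * n / 2 - e)) s)
    (hF : ∑ i ∈ Finset.Icc 1 n, completionTime s i ≤ n / 2 * (3 * n / 2 + 1)) :
    (Finset.Icc 1 n).val.map (fun i => min (s i 0) (s i 1) + 1) =
      2 • (Finset.Icc 1 (n / 2)).val ∧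
    (Finset.Icc 1 n).val.map (fun i => completionTime s i) =
      2 • (Finset.Icc (n / 2 + 1) n).val ∧
    (∀ i ∈ Finset.Icc 1 n, n / 2 < completionTime s i) ∧
    ((Finset.Icc 1 n).sup fun i => completionTime s i) = n ∧
    ∑ i ∈ Finset.Icc 1 n, completionTime s i = n / 2 * (3 * n / 2 + 1) := by
  obtain ⟨m, rfl⟩ := hne
  have hm1 : 1 ≤ m := by omega
  have hd2 : (m + m) / 2 = m := by omega
  have hd32 : 3 * (m + m) / 2 = 3 * m := by omega
  simp only [hd2, hd32] at h2 hfeas hF ⊢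
  set N := m + m with hN
  set I : Finset ℕ := Finset.Icc 1 N with hIdef
  have hI : I.card = N := by simp [hIdef, Nat.card_Icc]
  have hIvalcard : Multiset.card I.val = N := hI
  -- injectivity
  have hinj0 : Set.InjOn (fun i => s i 0) ↑I := hfeas.1 0
  have hinj1 : Set.InjOn (fun i => s i 1) ↑I := hfeas.1 1
  -- image finsets
  set T0 : Finset ℕ := I.image (fun i => s i 0) with hT0def
  set T1 : Finset ℕ := I.image (fun i => s i 1) with hT1def
  have hT0card : T0.card = N := by rw [hT0def, Finset.card_image_of_injOn hinj0, hI]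
  have hT1card : T1.card = N := by rw [hT1def, Finset.card_image_of_injOn hinj1, hI]
  have hT0sum : ∑ x ∈ T0, x = ∑ i ∈ I, s i 0 := Finset.sum_image (fun x hx y hy h => hinj0 hx hy h)
  have hT1sum : ∑ x ∈ T1, x = ∑ i ∈ I, s i 1 := Finset.sum_image (fun x hx y hy h => hinj1 hx hy h)
  have ha0 : (∑ i ∈ Finset.range N, i) ≤ ∑ i ∈ I, s i 0 :=
    hT0sum ▸ (my_sum_range_le N T0 hT0card).1
  have ha1 : (∑ i ∈ Finset.range N, i) ≤ ∑ i ∈ I, s i 1 :=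
    hT1sum ▸ (my_sum_range_le N T1 hT1card).1
  -- slack inequality
  have hslack : ∀ i ∈ I, min (s i 0) (s i 1) + (l i + (3 * m - e)) + 1
      ≤ max (s i 0) (s i 1) := by
    intro i hi
    rcases hfeas.2 i hi with h | h
    · have hle : s i 0 ≤ s i 1 := by omega
      rw [min_eq_left hle, max_eq_right hle]; exact h
    · have hle : s i 1 ≤ s i 0 := by omega
      rw [min_eq_right hle, max_eq_left hle]; exact h
  have hsum1 : (∑ i ∈ I, min (s i 0) (s i 1)) + ((∑ i ∈ I, l i) + N * (3 * m - e)) + N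
      ≤ ∑ i ∈ I, max (s i 0) (s i 1) := by
    have := Finset.sum_le_sum hslack
    simp only [Finset.sum_add_distrib, Finset.sum_const, smul_eq_mul, mul_one, hI] at this
    exact this
  -- sum of lags
  have hL : ((∑ i ∈ I, l i) + N * (3 * m - e)) + N = 2 * (m * m) := by
    have hpq : (e - N - 1) + (3 * m - e) + 1 = m := by omega
    rw [hsum]
    calc N * (e - N - 1) + N * (3 * m - e) + N
        = N * ((e - N - 1) + (3 * m - e) + 1) := by ring
      _ = N * m := by rw [hpq]
      _ = 2 * (m * m) := by rw [hN]; ring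
  -- min + max = sum
  have hEC : (∑ i ∈ I, min (s i 0) (s i 1)) + (∑ i ∈ I, max (s i 0) (s i 1))
      = (∑ i ∈ I, s i 0) + (∑ i ∈ I, s i 1) := by
    rw [← Finset.sum_add_distrib, ← Finset.sum_add_distrib]
    exact Finset.sum_congr rfl fun i _ => min_add_max _ _
  -- total completion
  have hFC : (∑ i ∈ I, completionTime s i) = (∑ i ∈ I, max (s i 0) (s i 1)) + N := by
    simp only [completionTime, Finset.sum_add_distrib, Finset.sum_const, smul_eq_mul,
      mul_one, hI]
  have hS2 : (∑ i ∈ Finset.range N, i) * 2 + N = 4 * (m * m) := by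
    have h0 := Finset.sum_range_id_mul_two N
    have hN1 : (N - 1) + 1 = N := by omega
    rw [h0]
    calc N * (N - 1) + N = N * ((N - 1) + 1) := by ring
      _ = N * N := by rw [hN1]
      _ = 4 * (m * m) := by rw [hN]; ring
  have hM2 : m * (3 * m + 1) = 3 * (m * m) + m := by ring
  have hFle : (∑ i ∈ I, max (s i 0) (s i 1)) + N ≤ 3 * (m * m) + m := by
    rw [← hFC, ← hM2]; exact hF
  -- stage 1 omega
  have hstage1 : (∑ i ∈ I, min (s i 0) (s i 1)) + m = m * m ∧
      (∑ i ∈ I, max (s i 0) (s i 1)) + m = 3 * (m * m) ∧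
      (∑ i ∈ I, s i 0) = (∑ i ∈ Finset.range N, i) ∧
      (∑ i ∈ I, s i 1) = (∑ i ∈ Finset.range N, i) := by
    obtain ⟨V, hV⟩ : ∃ V, m * m = V := ⟨_, rfl⟩
    rw [hV] at hL hS2 hFle
    omega
  obtain ⟨hEsum, hCsum, h0sum, h1sum⟩ := hstage1
  -- machine start times are exactly {0, ..., N-1}
  have hT0R : T0 = Finset.range N :=
    (my_sum_range_le N T0 hT0card).2 (by rw [hT0sum, h0sum])
  have hT1R : T1 = Finset.range N :=
    (my_sum_range_le N T1 hT1card).2 (by rw [hT1sum, h1sum])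
  have hval0 : I.val.map (fun i => s i 0) = Multiset.Ico 0 N := by
    rw [← Finset.image_val_of_injOn hinj0, ← hT0def, hT0R, Finset.range_eq_Ico]; rfl
  have hval1 : I.val.map (fun i => s i 1) = Multiset.Ico 0 N := by
    rw [← Finset.image_val_of_injOn hinj1, ← hT1def, hT1R, Finset.range_eq_Ico]; rfl
  -- multisets of minima and maxima
  set P : Multiset ℕ := I.val.map (fun i => min (s i 0) (s i 1)) with hPdef
  set Q : Multiset ℕ := I.val.map (fun i => max (s i 0) (s i 1)) with hQdef
  have hPQ : P + Q = Multiset.Ico 0 N + Multiset.Ico 0 N := by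
    rw [hPdef, hQdef, my_minmax_map, hval0, hval1]
  have hcardP : Multiset.card P = N := by rw [hPdef, Multiset.card_map, hIvalcard]
  have hPsum : P.sum = ∑ i ∈ I, min (s i 0) (s i 1) := rfl
  have hmemP : ∀ v ∈ P, v < N := by
    intro v hv
    have : v ∈ P + Q := Multiset.mem_add.mpr (Or.inl hv)
    rw [hPQ] at this
    rcases Multiset.mem_add.mp this with h | h <;>
      exact (Multiset.mem_Ico.mp h).2
  have hfle2 : ∀ v, P.count v ≤ 2 := by
    intro v
    have h1' : P.count v ≤ (P + Q).count v := Multiset.count_le_of_le v (Multiset.le_add_right P Q)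
    rw [hPQ, Multiset.count_add, my_count_Ico] at h1'
    split at h1' <;> omega
  -- counts over range N
  have hsum_counts : ∑ v ∈ Finset.Ico 0 N, P.count v = N := by
    rw [← Finset.range_eq_Ico]
    rw [Multiset.sum_count_eq_card (fun a ha => Finset.mem_range.mpr (hmemP a ha)), hcardP]
  have hsum_weighted : ∑ v ∈ Finset.Ico 0 N, P.count v * v = ∑ i ∈ I, min (s i 0) (s i 1) := by
    rw [← hPsum, ← Finset.range_eq_Ico]
    have h0 := Finset.sum_multiset_map_count P (id : ℕ → ℕ)
    rw [Multiset.map_id] at h0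
    rw [h0]
    rw [Finset.sum_subset
      (fun x hx => Finset.mem_range.mpr (hmemP x (Multiset.mem_toFinset.mp hx)))
      (fun x _ hx => by
        rw [Multiset.count_eq_zero_of_notMem (fun h => hx (Multiset.mem_toFinset.mpr h))]
        simp)]
    simp [smul_eq_mul]
  -- forcing: no minima ≥ m
  have hmN : m ≤ N := by omega
  have hsplitS : (∑ v ∈ Finset.Ico 0 m, P.count v) + (∑ v ∈ Finset.Ico m N, P.count v)
      = N := by rw [Finset.sum_Ico_consecutive _ (Nat.zero_le m) hmN, hsum_counts]
  have hsplitT : (∑ v ∈ Finset.Ico 0 m, P.count v * v) + (∑ v ∈ Finset.Ico m N, P.count v * v)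
      + m = m * m := by
    rw [Finset.sum_Ico_consecutive _ (Nat.zero_le m) hmN, hsum_weighted]; exact hEsum
  have hUS : (∑ v ∈ Finset.Ico 0 m, (2 - P.count v)) = (∑ v ∈ Finset.Ico m N, P.count v) := by
    have h2m : (∑ v ∈ Finset.Ico 0 m, (2 - P.count v)) + (∑ v ∈ Finset.Ico 0 m, P.count v)
        = N := by
      rw [← Finset.sum_add_distrib]
      have hpt : ∀ v ∈ Finset.Ico 0 m, (2 - P.count v) + P.count v = 2 :=
        fun v _ => by have := hfle2 v; omega
      rw [Finset.sum_congr rfl hpt, Finset.sum_const, Nat.card_Ico, smul_eq_mul]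
      omega
    omega
  have hT1' : m * (m - 1) ≤ (∑ v ∈ Finset.Ico 0 m, P.count v * v)
      + (m - 1) * (∑ v ∈ Finset.Ico m N, P.count v) := by
    have hpoint : ∀ v ∈ Finset.Ico 0 m,
        2 * v ≤ P.count v * v + (m - 1) * (2 - P.count v) := by
      intro v hv
      have hvm : v < m := (Finset.mem_Ico.mp hv).2
      have hcle := hfle2 v
      rcases (by omega : P.count v = 0 ∨ P.count v = 1 ∨ P.count v = 2) with h | h | h <;>
        rw [h] <;> omega
    have h0 := Finset.sum_le_sum hpoint
    rw [Finset.sum_add_distrib, ← Finset.mul_sum, ← Finset.mul_sum, hUS] at h0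
    have hlhs : 2 * ∑ v ∈ Finset.Ico 0 m, v = m * (m - 1) := by
      calc 2 * ∑ v ∈ Finset.Ico 0 m, v = (∑ v ∈ Finset.range m, v) * 2 := by
            rw [Finset.range_eq_Ico]; ring
        _ = m * (m - 1) := Finset.sum_range_id_mul_two m
    rw [hlhs] at h0
    exact h0
  have hT2' : m * (∑ v ∈ Finset.Ico m N, P.count v) ≤ ∑ v ∈ Finset.Ico m N, P.count v * v := by
    rw [Finset.mul_sum]
    refine Finset.sum_le_sum fun v hv => ?_
    have := (Finset.mem_Ico.mp hv).1
    calc m * P.count v = P.count v * m := by ring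
      _ ≤ P.count v * v := Nat.mul_le_mul_left _ this
  have hSzero : (∑ v ∈ Finset.Ico m N, P.count v) = 0 := by
    have hq : (m - 1) * (∑ v ∈ Finset.Ico m N, P.count v) + (∑ v ∈ Finset.Ico m N, P.count v)
        = m * (∑ v ∈ Finset.Ico m N, P.count v) := by
      have hm' : (m - 1) + 1 = m := by omega
      calc (m - 1) * (∑ v ∈ Finset.Ico m N, P.count v) + (∑ v ∈ Finset.Ico m N, P.count v)
          = ((m - 1) + 1) * (∑ v ∈ Finset.Ico m N, P.count v) := by ring
        _ = m * (∑ v ∈ Finset.Ico m N, P.count v) := by rw [hm']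
    have hX : m * (m - 1) + m = m * m := by
      have hm' : (m - 1) + 1 = m := by omega
      calc m * (m - 1) + m = m * ((m - 1) + 1) := by ring
        _ = m * m := by rw [hm']
    obtain ⟨X, hXe⟩ : ∃ X, m * (m - 1) = X := ⟨_, rfl⟩
    obtain ⟨V, hVe⟩ : ∃ V, m * m = V := ⟨_, rfl⟩
    obtain ⟨Y, hYe⟩ : ∃ Y, (m - 1) * (∑ v ∈ Finset.Ico m N, P.count v) = Y := ⟨_, rfl⟩
    obtain ⟨Z, hZe⟩ : ∃ Z, m * (∑ v ∈ Finset.Ico m N, P.count v) = Z := ⟨_, rfl⟩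
    rw [hXe, hYe] at hT1'
    rw [hZe] at hT2'
    rw [hYe, hZe] at hq
    rw [hXe, hVe] at hX
    rw [hVe] at hsplitT
    omega
  have hc0 : ∀ v ∈ Finset.Ico m N, P.count v = 0 := by
    intro v hv
    exact (Finset.sum_eq_zero_iff.mp hSzero) v hv
  have hc2 : ∀ v, v < m → P.count v = 2 := by
    have hS1 : ∑ v ∈ Finset.Ico 0 m, P.count v = ∑ v ∈ Finset.Ico 0 m, 2 := by
      have : ∑ v ∈ Finset.Ico 0 m, (2 : ℕ) = N := by
        simp [Nat.card_Ico, hN]; omega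
      omega
    intro v hv
    exact (Finset.sum_eq_sum_iff_of_le (fun i _ => hfle2 i)).mp hS1 v
      (Finset.mem_Ico.mpr ⟨Nat.zero_le v, hv⟩)
  -- P and Q as interval multisets
  have hP : P = 2 • Multiset.Ico 0 m := by
    refine Multiset.ext.mpr fun v => ?_
    rw [Multiset.count_nsmul, my_count_Ico]
    by_cases h1' : v < m
    · rw [hc2 v h1']; simp [Nat.zero_le, h1']
    · by_cases h2' : v < N
      · rw [hc0 v (Finset.mem_Ico.mpr ⟨by omega, h2'⟩)]; simp [h1']
      · rw [Multiset.count_eq_zero_of_notMem (fun h => h2' (hmemP v h))]; simp [h1']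
  have hIcoSplit : Multiset.Ico 0 N = Multiset.Ico 0 m + Multiset.Ico m N :=
    (Multiset.Ico_add_Ico_eq_Ico (Nat.zero_le m) hmN).symm
  have hQ : Q = 2 • Multiset.Ico m N := by
    have h0 : P + Q = P + 2 • Multiset.Ico m N := by
      rw [hPQ, hP, hIcoSplit, two_nsmul, two_nsmul]
      abel
    exact add_left_cancel h0
  -- interval conversions
  have hIcc1 : (Finset.Icc 1 m).val = Multiset.Ico 1 (m + 1) := by
    rw [← Finset.Ico_add_one_right_eq_Icc]; rfl
  have hIcc2 : (Finset.Icc (m + 1) N).val = Multiset.Ico (m + 1) (N + 1) := by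
    rw [← Finset.Ico_add_one_right_eq_Icc]; rfl
  refine ⟨?_, ?_, ?_, ?_, ?_⟩
  · -- earlier completions
    have : (Finset.Icc 1 N).val.map (fun i => min (s i 0) (s i 1) + 1)
        = P.map (fun x => x + 1) := by
      rw [hPdef, Multiset.map_map]; rfl
    rw [this, hP, two_nsmul, Multiset.map_add, Multiset.map_add_right_Ico, hIcc1, ← two_nsmul]
  · -- completion times
    have : (Finset.Icc 1 N).val.map (fun i => completionTime s i)
        = Q.map (fun x => x + 1) := by
      rw [hQdef, Multiset.map_map]; rfl
    rw [this, hQ, two_nsmul, Multiset.map_add, Multiset.map_add_right_Ico, hIcc2, ← two_nsmul]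
  · -- every job completes after m
    intro i hi
    have hmm : max (s i 0) (s i 1) ∈ Q := Multiset.mem_map_of_mem _ hi
    rw [hQ] at hmm
    have := (Multiset.mem_Ico.mp (Multiset.mem_nsmul.mp hmm).2).1
    simp only [completionTime]
    omega
  · -- makespan
    have hub : ∀ i ∈ I, completionTime s i ≤ N := by
      intro i hi
      have hmm : max (s i 0) (s i 1) ∈ Q := Multiset.mem_map_of_mem _ hi
      rw [hQ] at hmm
      have := (Multiset.mem_Ico.mp (Multiset.mem_nsmul.mp hmm).2).2
      simp only [completionTime]
      omega
    refine le_antisymm (Finset.sup_le hub) ?_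
    have hmem : (N - 1) ∈ Q := by
      rw [hQ]
      exact Multiset.mem_nsmul.mpr ⟨two_ne_zero, Multiset.mem_Ico.mpr ⟨by omega, by omega⟩⟩
    obtain ⟨i, hi, hieq⟩ := Multiset.mem_map.mp hmem
    have : completionTime s i = N := by simp only [completionTime]; omega
    calc N = completionTime s i := this.symm
      _ ≤ I.sup fun i => completionTime s i := Finset.le_sup hi
  · -- total completion time
    rw [hFC, hM2]
    obtain ⟨V, hV⟩ : ∃ V, m * m = V := ⟨_, rfl⟩
    rw [hV] at hCsum ⊢
    omega
end

section
/- Let n be a positive even integer, e an integer with n < e < 3n/2, and l_1,…,l_n nonnegative integers with Σ_{i=1}^{n} l_i = n(e − n − 1); set Δ = 3n/2 − e, L_i = l_i + Δ, and F = (n/2)(3n/2 + 1). Then the PRN3DM instance (n, e, l_1,…,l_n) is a yes-instance if and only if there exists a feasible schedule for the two-machine unit-time open shop with time lags L_1,…,L_n whose total completion time satisfies Σ_{i=1}^{n} C_i ≤ F. (This is the correctness of the reduction underlying the theorem that O2 | p_{ij}=1, l_i | ΣC_i is NP-hard in the strong sense.) -/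
namespace Stmt6Aux
open Finset
set_option maxHeartbeats 2000000


lemma gauss2 (m : ℕ) : 2 * ∑ k ∈ range m, k + m = m * m := by
  induction m with
  | zero => simp
  | succ m ih =>
    rw [Finset.sum_range_succ]
    have : (m+1)*(m+1) = m*m + 2*m + 1 := by ring
    omega

lemma sum_range_card_le (T : Finset ℕ) : ∑ k ∈ range T.card, k ≤ ∑ t ∈ T, t := by
  induction T using Finset.strongInduction with
  | _ T ih =>
    rcases T.eq_empty_or_nonempty with rfl | hT
    · simp
    · have hMem : T.max' hT ∈ T := T.max'_mem hT
      set M := T.max' hT with hM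
      have hsub : T ⊆ range (M+1) := fun x hx => mem_range.2 (Nat.lt_succ_of_le (T.le_max' x hx))
      have hcard : T.card ≤ M + 1 := by
        have := Finset.card_le_card hsub
        simpa using this
      have herase : (T.erase M).card = T.card - 1 := Finset.card_erase_of_mem hMem
      have ih' := ih _ (Finset.erase_ssubset hMem)
      rw [herase] at ih'
      have hsum : ∑ t ∈ T, t = M + ∑ t ∈ T.erase M, t := (Finset.add_sum_erase T id hMem).symm
      have hpos : 1 ≤ T.card := Finset.card_pos.2 hT
      have hr : ∑ k ∈ range T.card, k = ∑ k ∈ range (T.card - 1), k + (T.card - 1) := by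
        conv_lhs => rw [show T.card = (T.card - 1) + 1 by omega]
        rw [Finset.sum_range_succ]
      omega

lemma eq_range_of_sum_le (T : Finset ℕ) (hle : ∑ t ∈ T, t ≤ ∑ k ∈ range T.card, k) :
    T = range T.card := by
  induction T using Finset.strongInduction with
  | _ T ih =>
    rcases T.eq_empty_or_nonempty with rfl | hT
    · simp
    · have hMem : T.max' hT ∈ T := T.max'_mem hT
      set M := T.max' hT with hM
      have hsub : T ⊆ range (M+1) := fun x hx => mem_range.2 (Nat.lt_succ_of_le (T.le_max' x hx))
      have hcard : T.card ≤ M + 1 := by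
        have := Finset.card_le_card hsub
        simpa using this
      have herase : (T.erase M).card = T.card - 1 := Finset.card_erase_of_mem hMem
      have hlow := sum_range_card_le (T.erase M)
      rw [herase] at hlow
      have hsum : ∑ t ∈ T, t = M + ∑ t ∈ T.erase M, t := (Finset.add_sum_erase T id hMem).symm
      have hpos : 1 ≤ T.card := Finset.card_pos.2 hT
      have hr : ∑ k ∈ range T.card, k = ∑ k ∈ range (T.card - 1), k + (T.card - 1) := by
        conv_lhs => rw [show T.card = (T.card - 1) + 1 by omega]
        rw [Finset.sum_range_succ]
      have hMeq : M = T.card - 1 := by omega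
      have hle' : ∑ t ∈ T.erase M, t ≤ ∑ k ∈ range (T.erase M).card, k := by
        rw [herase]; omega
      have hE := ih _ (Finset.erase_ssubset hMem) hle'
      rw [herase] at hE
      conv_rhs => rw [show T.card = T.card - 1 + 1 from by omega, Finset.range_add_one]
      rw [← hE, ← hMeq]
      exact (Finset.insert_erase hMem).symm

lemma bijOn_of_image_eq {f : ℕ → ℕ} {A T : Finset ℕ} (hinj : Set.InjOn f ↑A)
    (himg : A.image f = T) : Set.BijOn f ↑A ↑T := by
  refine ⟨fun x hx => ?_, hinj, fun y hy => ?_⟩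
  · rw [← himg]; exact_mod_cast Finset.mem_image_of_mem f (by exact_mod_cast hx)
  · rw [← himg] at hy
    rcases Finset.mem_image.1 (by exact_mod_cast hy) with ⟨x, hx, rfl⟩
    exact ⟨x, by exact_mod_cast hx, rfl⟩

lemma tt_aux (x t : ℕ) (H : x*x + (x+t+t)*(x+t+t) ≤ 2*((x+t)*(x+t))) : t = 0 := by
  have hx : (x+t)*(x+t) = x*x + 2*(x*t) + t*t := by ring
  have hy : (x+t+t)*(x+t+t) = x*x + 4*(x*t) + 4*(t*t) := by ring
  have h0 : t*t ≤ 0 := by linarith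
  have := Nat.le_zero.mp h0
  exact mul_self_eq_zero.mp this

lemma sq_helper (a b : ℕ) : (a+b)*(a+b) ≤ 2*(a*a+b*b) := by
  rcases le_total a b with H | H
  · obtain ⟨d, rfl⟩ := Nat.exists_eq_add_of_le H
    nlinarith
  · obtain ⟨d, rfl⟩ := Nat.exists_eq_add_of_le H
    nlinarith

lemma halves (a b h : ℕ) (h1 : a + b = 2*h) (h2 : a*a + b*b ≤ 2*(h*h)) : a = h := by
  rcases le_total a h with H | H
  · obtain ⟨t, rfl⟩ := Nat.exists_eq_add_of_le H
    have hb : b = a + t + t := by omega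
    subst hb
    have := tt_aux a t h2
    omega
  · obtain ⟨t, rfl⟩ := Nat.exists_eq_add_of_le H
    have hb : b + t = h := by omega
    rw [← hb] at h2
    have := tt_aux b t (by linarith)
    omega

lemma keysum (h : ℕ) : 2 * ∑ j ∈ Icc (h+1) (2*h), (3*h+1-j) = h * (3*h+1) := by
  have himg : Icc (h+1) (2*h) = (range h).image (fun k => 2*h - k) := by
    ext j
    simp only [Finset.mem_Icc, Finset.mem_image, Finset.mem_range]
    constructor
    · rintro ⟨hj1, hj2⟩; exact ⟨2*h - j, by omega, by omega⟩
    · rintro ⟨k, hk, rfl⟩; omega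
  rw [himg, Finset.sum_image (by intro x hx y hy hxy; simp only [Finset.mem_coe, Finset.mem_range] at hx hy hxy; omega)]
  have hcg : ∀ k ∈ range h, 3*h+1 - (2*h - k) = (h+1) + k := by
    intro k hk; simp only [Finset.mem_range] at hk; omega
  rw [Finset.sum_congr rfl hcg, Finset.sum_add_distrib, Finset.sum_const, Finset.card_range,
    smul_eq_mul]
  have g := gauss2 h
  have e1 : h*(3*h+1) = 3*(h*h)+h := by ring
  have e2 : h*(h+1) = h*h + h := by ring
  linarith

theorem fwd (h e : ℕ) (l : ℕ → ℕ) (hh : 1 ≤ h) (h1 : 2*h < e) (he3 : e < 3*h)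
    (A B : Finset ℕ) (πA σA πB σB : ℕ → ℕ)
    (hAB : Disjoint A B) (hUnion : A ∪ B = Finset.Icc 1 (2*h))
    (hcA : A.card = h) (hcB : B.card = h)
    (hπA : Set.BijOn πA ↑A ↑(Finset.Icc 1 h))
    (hσA : Set.BijOn σA ↑A ↑(Finset.Icc (h + 1) (2*h)))
    (hπB : Set.BijOn πB ↑B ↑(Finset.Icc (h + 1) (2*h)))
    (hσB : Set.BijOn σB ↑B ↑(Finset.Icc 1 h))
    (heqA : ∀ i ∈ A, πA i + l i + σA i = e)
    (heqB : ∀ i ∈ B, πB i + l i + σB i = e) :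
    ∃ s : ℕ → Fin 2 → ℕ,
      ((∀ m : Fin 2, Set.InjOn (fun i => s i m) ↑(Finset.Icc 1 (2*h))) ∧
      (∀ i ∈ Finset.Icc 1 (2*h), s i 0 + (l i + (3*(2*h)/2 - e)) + 1 ≤ s i 1 ∨
          s i 1 + (l i + (3*(2*h)/2 - e)) + 1 ≤ s i 0)) ∧
      ∑ i ∈ Finset.Icc 1 (2*h), (max (s i 0) (s i 1) + 1) ≤ h * (3*h+1) := by
  have hnotA : ∀ i ∈ B, i ∉ A := fun i hi hiA => (Finset.disjoint_left.mp hAB hiA hi)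
  have fπA : ∀ i ∈ A, 1 ≤ πA i ∧ πA i ≤ h := by
    intro i hi
    have := hπA.1 (Finset.mem_coe.mpr hi)
    simpa [Finset.mem_Icc] using this
  have fσA : ∀ i ∈ A, h + 1 ≤ σA i ∧ σA i ≤ 2*h := by
    intro i hi
    have := hσA.1 (Finset.mem_coe.mpr hi)
    simpa [Finset.mem_Icc] using this
  have fπB : ∀ i ∈ B, h + 1 ≤ πB i ∧ πB i ≤ 2*h := by
    intro i hi
    have := hπB.1 (Finset.mem_coe.mpr hi)
    simpa [Finset.mem_Icc] using this
  have fσB : ∀ i ∈ B, 1 ≤ σB i ∧ σB i ≤ h := by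
    intro i hi
    have := hσB.1 (Finset.mem_coe.mpr hi)
    simpa [Finset.mem_Icc] using this
  set s : ℕ → Fin 2 → ℕ := fun i m => if i ∈ A then (if m = 0 then πA i - 1 else 3*h - σA i)
                     else (if m = 0 then 3*h - πB i else σB i - 1) with hs
  have eA0 : ∀ i ∈ A, s i 0 = πA i - 1 := by intro i hi; simp [hs, hi]
  have eA1 : ∀ i ∈ A, s i 1 = 3*h - σA i := by intro i hi; simp [hs, hi]
  have eB0 : ∀ i ∈ B, s i 0 = 3*h - πB i := by intro i hi; simp [hs, hnotA i hi]
  have eB1 : ∀ i ∈ B, s i 1 = σB i - 1 := by intro i hi; simp [hs, hnotA i hi]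
  have injm : ∀ m0 m1 : Fin 2,
      (∀ i ∈ A, s i m0 = πA i - 1) → (∀ i ∈ A, s i m1 = 3*h - σA i) →
      (∀ i ∈ B, s i m0 = 3*h - πB i) → (∀ i ∈ B, s i m1 = σB i - 1) → True := fun _ _ _ _ _ _ => trivial
  clear injm
  have inj0 : Set.InjOn (fun i => s i 0) ↑(Finset.Icc 1 (2*h)) := by
    intro x hx y hy hxy
    have hx' : x ∈ A ∪ B := by rw [hUnion]; exact Finset.mem_coe.mp hx
    have hy' : y ∈ A ∪ B := by rw [hUnion]; exact Finset.mem_coe.mp hy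
    simp only at hxy
    rcases Finset.mem_union.1 hx' with hxA | hxB <;> rcases Finset.mem_union.1 hy' with hyA | hyB
    · rw [eA0 x hxA, eA0 y hyA] at hxy
      exact hπA.2.1 (Finset.mem_coe.mpr hxA) (Finset.mem_coe.mpr hyA)
        (by have := fπA x hxA; have := fπA y hyA; omega)
    · rw [eA0 x hxA, eB0 y hyB] at hxy
      have := fπA x hxA; have := fπB y hyB; omega
    · rw [eB0 x hxB, eA0 y hyA] at hxy
      have := fπA y hyA; have := fπB x hxB; omega
    · rw [eB0 x hxB, eB0 y hyB] at hxy
      exact hπB.2.1 (Finset.mem_coe.mpr hxB) (Finset.mem_coe.mpr hyB)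
        (by have := fπB x hxB; have := fπB y hyB; omega)
  have inj1 : Set.InjOn (fun i => s i 1) ↑(Finset.Icc 1 (2*h)) := by
    intro x hx y hy hxy
    have hx' : x ∈ A ∪ B := by rw [hUnion]; exact Finset.mem_coe.mp hx
    have hy' : y ∈ A ∪ B := by rw [hUnion]; exact Finset.mem_coe.mp hy
    simp only at hxy
    rcases Finset.mem_union.1 hx' with hxA | hxB <;> rcases Finset.mem_union.1 hy' with hyA | hyB
    · rw [eA1 x hxA, eA1 y hyA] at hxy
      exact hσA.2.1 (Finset.mem_coe.mpr hxA) (Finset.mem_coe.mpr hyA)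
        (by have := fσA x hxA; have := fσA y hyA; omega)
    · rw [eA1 x hxA, eB1 y hyB] at hxy
      have := fσA x hxA; have := fσB y hyB; omega
    · rw [eB1 x hxB, eA1 y hyA] at hxy
      have := fσA y hyA; have := fσB x hxB; omega
    · rw [eB1 x hxB, eB1 y hyB] at hxy
      exact hσB.2.1 (Finset.mem_coe.mpr hxB) (Finset.mem_coe.mpr hyB)
        (by have := fσB x hxB; have := fσB y hyB; omega)
  refine ⟨s, ⟨?_, ?_⟩, ?_⟩
  · intro m
    fin_cases m
    · exact inj0
    · exact inj1
  · intro i hi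
    have hi' : i ∈ A ∪ B := by rw [hUnion]; exact hi
    rcases Finset.mem_union.1 hi' with hiA | hiB
    · left
      rw [eA0 i hiA, eA1 i hiA]
      have := fπA i hiA; have := fσA i hiA; have := heqA i hiA
      omega
    · right
      rw [eB0 i hiB, eB1 i hiB]
      have := fπB i hiB; have := fσB i hiB; have := heqB i hiB
      omega
  · have injσA : ∀ x ∈ A, ∀ y ∈ A, σA x = σA y → x = y :=
      fun x hx y hy hxy => hσA.2.1 (Finset.mem_coe.mpr hx) (Finset.mem_coe.mpr hy) hxy
    have injπB : ∀ x ∈ B, ∀ y ∈ B, πB x = πB y → x = y :=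
      fun x hx y hy hxy => hπB.2.1 (Finset.mem_coe.mpr hx) (Finset.mem_coe.mpr hy) hxy
    have himgA : A.image σA = Icc (h+1) (2*h) := by
      apply Finset.coe_injective
      rw [Finset.coe_image, hσA.image_eq]
    have himgB : B.image πB = Icc (h+1) (2*h) := by
      apply Finset.coe_injective
      rw [Finset.coe_image, hπB.image_eq]
    rw [← hUnion, Finset.sum_union hAB]
    have sA : ∑ i ∈ A, (max (s i 0) (s i 1) + 1) = ∑ j ∈ Icc (h+1) (2*h), (3*h+1-j) := by
      rw [show (∑ j ∈ Icc (h+1) (2*h), (3*h+1-j)) = ∑ i ∈ A, (3*h+1 - σA i) from by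
        rw [← himgA]; exact Finset.sum_image injσA]
      apply Finset.sum_congr rfl
      intro i hi
      rw [eA0 i hi, eA1 i hi]
      have := fπA i hi; have := fσA i hi
      omega
    have sB : ∑ i ∈ B, (max (s i 0) (s i 1) + 1) = ∑ j ∈ Icc (h+1) (2*h), (3*h+1-j) := by
      rw [show (∑ j ∈ Icc (h+1) (2*h), (3*h+1-j)) = ∑ i ∈ B, (3*h+1 - πB i) from by
        rw [← himgB]; exact Finset.sum_image injπB]
      apply Finset.sum_congr rfl
      intro i hi
      rw [eB0 i hi, eB1 i hi]
      have := fπB i hi; have := fσB i hi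
      omega
    rw [sA, sB]
    have := keysum h
    omega

theorem bwd (h e : ℕ) (l : ℕ → ℕ) (hh : 1 ≤ h) (h1 : 2*h < e) (he3 : e < 3*h)
    (hsum : ∑ i ∈ Finset.Icc 1 (2*h), l i = 2*h * (e - 2*h - 1))
    (s : ℕ → Fin 2 → ℕ)
    (hinj : ∀ m : Fin 2, Set.InjOn (fun i => s i m) ↑(Finset.Icc 1 (2*h)))
    (hlag : ∀ i ∈ Finset.Icc 1 (2*h), s i 0 + (l i + (3*(2*h)/2 - e)) + 1 ≤ s i 1 ∨
          s i 1 + (l i + (3*(2*h)/2 - e)) + 1 ≤ s i 0)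
    (hsumC : ∑ i ∈ Finset.Icc 1 (2*h), (max (s i 0) (s i 1) + 1) ≤ h * (3*h+1)) :
    ∃ (A B : Finset ℕ) (πA σA πB σB : ℕ → ℕ),
    Disjoint A B ∧ A ∪ B = Finset.Icc 1 (2*h) ∧
    A.card = h ∧ B.card = h ∧
    Set.BijOn πA ↑A ↑(Finset.Icc 1 h) ∧
    Set.BijOn σA ↑A ↑(Finset.Icc (h + 1) (2*h)) ∧
    Set.BijOn πB ↑B ↑(Finset.Icc (h + 1) (2*h)) ∧
    Set.BijOn σB ↑B ↑(Finset.Icc 1 h) ∧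
    (∀ i ∈ A, πA i + l i + σA i = e) ∧
    (∀ i ∈ B, πB i + l i + σB i = e) := by
  have hgap1 : ∀ i ∈ Finset.Icc 1 (2*h),
      min (s i 0) (s i 1) + (l i + (3*h - e)) + 1 ≤ max (s i 0) (s i 1) := by
    intro i hi
    rcases hlag i hi with H | H <;> omega
  have hcardN : (Finset.Icc 1 (2*h)).card = 2*h := by rw [Nat.card_Icc]; omega
  have hinj' : ∀ m : Fin 2, ∀ x ∈ Finset.Icc 1 (2*h), ∀ y ∈ Finset.Icc 1 (2*h),
      s x m = s y m → x = y := fun m x hx y hy hxy =>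
    hinj m (Finset.mem_coe.mpr hx) (Finset.mem_coe.mpr hy) hxy
  have him2 : ∀ m : Fin 2, ∑ t ∈ (Finset.Icc 1 (2*h)).image (fun i => s i m), t
      = ∑ i ∈ Finset.Icc 1 (2*h), s i m := fun m => Finset.sum_image (hinj' m)
  have him1 : ∀ m : Fin 2, ((Finset.Icc 1 (2*h)).image (fun i => s i m)).card = 2*h := by
    intro m; rw [Finset.card_image_of_injOn (hinj m), hcardN]
  have hm0 : ∑ k ∈ range (2*h), k ≤ ∑ i ∈ Finset.Icc 1 (2*h), s i 0 := by
    have t := sum_range_card_le ((Finset.Icc 1 (2*h)).image (fun i => s i 0))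
    rwa [him1 0, him2 0] at t
  have hm1 : ∑ k ∈ range (2*h), k ≤ ∑ i ∈ Finset.Icc 1 (2*h), s i 1 := by
    have t := sum_range_card_le ((Finset.Icc 1 (2*h)).image (fun i => s i 1))
    rwa [him1 1, him2 1] at t
  have hRv := gauss2 (2*h)
  have hf1 : ∑ i ∈ Finset.Icc 1 (2*h), min (s i 0) (s i 1)
        + ∑ i ∈ Finset.Icc 1 (2*h), max (s i 0) (s i 1)
      = ∑ i ∈ Finset.Icc 1 (2*h), s i 0 + ∑ i ∈ Finset.Icc 1 (2*h), s i 1 := by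
    rw [← Finset.sum_add_distrib, ← Finset.sum_add_distrib]
    exact Finset.sum_congr rfl (fun i _ => min_add_max _ _)
  have hCv : ∑ i ∈ Finset.Icc 1 (2*h), (max (s i 0) (s i 1) + 1)
      = ∑ i ∈ Finset.Icc 1 (2*h), max (s i 0) (s i 1) + 2*h := by
    rw [Finset.sum_add_distrib, Finset.sum_const, hcardN, smul_eq_mul, mul_one]
  have hgapS : ∑ i ∈ Finset.Icc 1 (2*h), (min (s i 0) (s i 1) + (l i + (3*h - e)) + 1)
      ≤ ∑ i ∈ Finset.Icc 1 (2*h), max (s i 0) (s i 1) := Finset.sum_le_sum hgap1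
  have hexp : ∑ i ∈ Finset.Icc 1 (2*h), (min (s i 0) (s i 1) + (l i + (3*h - e)) + 1)
      = (∑ i ∈ Finset.Icc 1 (2*h), min (s i 0) (s i 1))
        + ((∑ i ∈ Finset.Icc 1 (2*h), l i) + 2*h * (3*h - e)) + 2*h := by
    simp only [Finset.sum_add_distrib, Finset.sum_const, hcardN, smul_eq_mul, mul_one]
  have hmul : 2*h*(h-1) + 2*h = 2*(h*h) := by
    cases h with
    | zero => simp
    | succ m => simp only [Nat.add_sub_cancel]; ring
  have hl2' : 2*h*(e-2*h-1) + 2*h*(3*h-e) = 2*h*(h-1) := by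
    rw [← mul_add]
    congr 1
    omega
  have pin0 : ∑ i ∈ Finset.Icc 1 (2*h), s i 0 = ∑ k ∈ range (2*h), k := by
    linarith [hsumC, hCv, hgapS, hexp, hsum, hmul, hl2', hf1, hm0, hm1, hRv]
  have pin1 : ∑ i ∈ Finset.Icc 1 (2*h), s i 1 = ∑ k ∈ range (2*h), k := by
    linarith [hsumC, hCv, hgapS, hexp, hsum, hmul, hl2', hf1, hm0, hm1, hRv]
  have pinSu : 2 * ∑ i ∈ Finset.Icc 1 (2*h), min (s i 0) (s i 1) + 2*h = 2*(h*h) := by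
    linarith [hsumC, hCv, hgapS, hexp, hsum, hmul, hl2', hf1, hm0, hm1, hRv]
  have pinSv : ∑ i ∈ Finset.Icc 1 (2*h), max (s i 0) (s i 1)
      = ∑ i ∈ Finset.Icc 1 (2*h), min (s i 0) (s i 1) + 2*(h*h) := by
    linarith [hsumC, hCv, hgapS, hexp, hsum, hmul, hl2', hf1, hm0, hm1, hRv]
  have hpt : ∀ i ∈ Finset.Icc 1 (2*h),
      min (s i 0) (s i 1) + (l i + (3*h - e)) + 1 = max (s i 0) (s i 1) := by
    apply (Finset.sum_eq_sum_iff_of_le hgap1).mp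
    rw [hexp]
    linarith [hsum, hmul, hl2', pinSv]
  have hT0 : (Finset.Icc 1 (2*h)).image (fun i => s i 0) = range (2*h) := by
    have hc := him1 0
    have t := eq_range_of_sum_le ((Finset.Icc 1 (2*h)).image (fun i => s i 0))
      (by rw [hc, him2 0]; exact le_of_eq pin0)
    rwa [hc] at t
  have hT1 : (Finset.Icc 1 (2*h)).image (fun i => s i 1) = range (2*h) := by
    have hc := him1 1
    have t := eq_range_of_sum_le ((Finset.Icc 1 (2*h)).image (fun i => s i 1))
      (by rw [hc, him2 1]; exact le_of_eq pin1)
    rwa [hc] at t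
  set A := (Finset.Icc 1 (2*h)).filter (fun i => s i 0 < s i 1) with hAdef
  set B := (Finset.Icc 1 (2*h)).filter (fun i => s i 1 < s i 0) with hBdef
  have memA : ∀ i ∈ A, s i 0 < s i 1 := by
    intro i hi; rw [hAdef, Finset.mem_filter] at hi; exact hi.2
  have memB : ∀ i ∈ B, s i 1 < s i 0 := by
    intro i hi; rw [hBdef, Finset.mem_filter] at hi; exact hi.2
  have hABdisj : Disjoint A B := by
    rw [Finset.disjoint_left]
    intro i hi1 hi2
    have := memA i hi1; have := memB i hi2; omega
  have hABunion : A ∪ B = Finset.Icc 1 (2*h) := by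
    ext i
    simp only [hAdef, hBdef, Finset.mem_union, Finset.mem_filter]
    constructor
    · rintro (⟨hi, _⟩ | ⟨hi, _⟩) <;> exact hi
    · intro hi
      have := hpt i hi
      rcases lt_trichotomy (s i 0) (s i 1) with H|H|H
      · exact Or.inl ⟨hi, H⟩
      · exfalso; omega
      · exact Or.inr ⟨hi, H⟩
  have hAsub : A ⊆ Finset.Icc 1 (2*h) := Finset.filter_subset _ _
  have hBsub : B ⊆ Finset.Icc 1 (2*h) := Finset.filter_subset _ _
  have injA0 : Set.InjOn (fun i => s i 0) ↑A := (hinj 0).mono (Finset.coe_subset.mpr hAsub)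
  have injA1 : Set.InjOn (fun i => s i 1) ↑A := (hinj 1).mono (Finset.coe_subset.mpr hAsub)
  have injB0 : Set.InjOn (fun i => s i 0) ↑B := (hinj 0).mono (Finset.coe_subset.mpr hBsub)
  have injB1 : Set.InjOn (fun i => s i 1) ↑B := (hinj 1).mono (Finset.coe_subset.mpr hBsub)
  have injA0' : ∀ x ∈ A, ∀ y ∈ A, s x 0 = s y 0 → x = y :=
    fun x hx y hy => injA0 (Finset.mem_coe.mpr hx) (Finset.mem_coe.mpr hy)
  have injA1' : ∀ x ∈ A, ∀ y ∈ A, s x 1 = s y 1 → x = y :=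
    fun x hx y hy => injA1 (Finset.mem_coe.mpr hx) (Finset.mem_coe.mpr hy)
  have injB0' : ∀ x ∈ B, ∀ y ∈ B, s x 0 = s y 0 → x = y :=
    fun x hx y hy => injB0 (Finset.mem_coe.mpr hx) (Finset.mem_coe.mpr hy)
  have injB1' : ∀ x ∈ B, ∀ y ∈ B, s x 1 = s y 1 → x = y :=
    fun x hx y hy => injB1 (Finset.mem_coe.mpr hx) (Finset.mem_coe.mpr hy)
  have hab : A.card + B.card = 2*h := by
    rw [← Finset.card_union_of_disjoint hABdisj, hABunion, hcardN]
  have hSuA : ∑ k ∈ range A.card, k ≤ ∑ i ∈ A, s i 0 := by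
    have t := sum_range_card_le (A.image (fun i => s i 0))
    rwa [Finset.card_image_of_injOn injA0, Finset.sum_image injA0'] at t
  have hSuB : ∑ k ∈ range B.card, k ≤ ∑ i ∈ B, s i 1 := by
    have t := sum_range_card_le (B.image (fun i => s i 1))
    rwa [Finset.card_image_of_injOn injB1, Finset.sum_image injB1'] at t
  have hsplitu : ∑ i ∈ A, s i 0 + ∑ i ∈ B, s i 1
      = ∑ i ∈ Finset.Icc 1 (2*h), min (s i 0) (s i 1) := by
    conv_rhs => rw [← hABunion]
    rw [Finset.sum_union hABdisj]
    congr 1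
    · apply Finset.sum_congr rfl
      intro i hi
      have := memA i hi; omega
    · apply Finset.sum_congr rfl
      intro i hi
      have := memB i hi; omega
  have gA := gauss2 A.card
  have gB := gauss2 B.card
  have haa : A.card = h := by
    apply halves A.card B.card h hab
    linarith [hSuA, hSuB, gA, gB, hsplitu, pinSu]
  have hbb : B.card = h := by omega
  have gh := gauss2 h
  have hSuAle : ∑ i ∈ A, s i 0 ≤ ∑ k ∈ range h, k := by
    have hSuB' := hSuB
    rw [hbb] at hSuB'
    linarith [pinSu, hsplitu]
  have hSuBle : ∑ i ∈ B, s i 1 ≤ ∑ k ∈ range h, k := by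
    have hSuA' := hSuA
    rw [haa] at hSuA'
    linarith [pinSu, hsplitu]
  have hTA0 : A.image (fun i => s i 0) = range h := by
    have hc : (A.image (fun i => s i 0)).card = h := by
      rw [Finset.card_image_of_injOn injA0, haa]
    have t := eq_range_of_sum_le (A.image (fun i => s i 0))
      (by rw [hc, Finset.sum_image injA0']; exact hSuAle)
    rwa [hc] at t
  have hTB1 : B.image (fun i => s i 1) = range h := by
    have hc : (B.image (fun i => s i 1)).card = h := by
      rw [Finset.card_image_of_injOn injB1, hbb]
    have t := eq_range_of_sum_le (B.image (fun i => s i 1))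
      (by rw [hc, Finset.sum_image injB1']; exact hSuBle)
    rwa [hc] at t
  have hrsub : range h ⊆ range (2*h) := by
    intro x hx; rw [Finset.mem_range] at *; omega
  have hTB0 : B.image (fun i => s i 0) = range (2*h) \ range h := by
    have hu : A.image (fun i => s i 0) ∪ B.image (fun i => s i 0) = range (2*h) := by
      rw [← Finset.image_union, hABunion, hT0]
    have hcB0 : (B.image (fun i => s i 0)).card = h := by
      rw [Finset.card_image_of_injOn injB0, hbb]
    have hcA0 : (A.image (fun i => s i 0)).card = h := by
      rw [Finset.card_image_of_injOn injA0, haa]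
    have hinter : (A.image (fun i => s i 0)) ∩ (B.image (fun i => s i 0)) = ∅ := by
      have hci := Finset.card_union_add_card_inter (A.image (fun i => s i 0))
        (B.image (fun i => s i 0))
      rw [hu, Finset.card_range, hcA0, hcB0] at hci
      exact Finset.card_eq_zero.mp (by omega)
    apply Finset.eq_of_subset_of_card_le
    · intro x hx
      rw [Finset.mem_sdiff]
      refine ⟨by rw [← hu]; exact Finset.mem_union_right _ hx, ?_⟩
      rw [← hTA0]
      intro hxA
      have hmem : x ∈ (A.image (fun i => s i 0)) ∩ (B.image (fun i => s i 0)) :=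
        Finset.mem_inter.mpr ⟨hxA, hx⟩
      rw [hinter] at hmem
      exact absurd hmem (Finset.notMem_empty x)
    · rw [Finset.card_sdiff_of_subset hrsub, Finset.card_range, Finset.card_range, hcB0]
      omega
  have hTA1 : A.image (fun i => s i 1) = range (2*h) \ range h := by
    have hu : B.image (fun i => s i 1) ∪ A.image (fun i => s i 1) = range (2*h) := by
      rw [← Finset.image_union, Finset.union_comm B A, hABunion, hT1]
    have hcB1 : (B.image (fun i => s i 1)).card = h := by
      rw [Finset.card_image_of_injOn injB1, hbb]
    have hcA1 : (A.image (fun i => s i 1)).card = h := by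
      rw [Finset.card_image_of_injOn injA1, haa]
    have hinter : (B.image (fun i => s i 1)) ∩ (A.image (fun i => s i 1)) = ∅ := by
      have hci := Finset.card_union_add_card_inter (B.image (fun i => s i 1))
        (A.image (fun i => s i 1))
      rw [hu, Finset.card_range, hcA1, hcB1] at hci
      exact Finset.card_eq_zero.mp (by omega)
    apply Finset.eq_of_subset_of_card_le
    · intro x hx
      rw [Finset.mem_sdiff]
      refine ⟨by rw [← hu]; exact Finset.mem_union_right _ hx, ?_⟩
      rw [← hTB1]
      intro hxB
      have hmem : x ∈ (B.image (fun i => s i 1)) ∩ (A.image (fun i => s i 1)) :=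
        Finset.mem_inter.mpr ⟨hxB, hx⟩
      rw [hinter] at hmem
      exact absurd hmem (Finset.notMem_empty x)
    · rw [Finset.card_sdiff_of_subset hrsub, Finset.card_range, Finset.card_range, hcA1]
      omega
  have bA0 : ∀ i ∈ A, s i 0 < h := by
    intro i hi
    have hm : s i 0 ∈ A.image (fun i => s i 0) := Finset.mem_image_of_mem _ hi
    rw [hTA0, Finset.mem_range] at hm; exact hm
  have bB1 : ∀ i ∈ B, s i 1 < h := by
    intro i hi
    have hm : s i 1 ∈ B.image (fun i => s i 1) := Finset.mem_image_of_mem _ hi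
    rw [hTB1, Finset.mem_range] at hm; exact hm
  have bA1 : ∀ i ∈ A, h ≤ s i 1 ∧ s i 1 < 2*h := by
    intro i hi
    have hm : s i 1 ∈ A.image (fun i => s i 1) := Finset.mem_image_of_mem _ hi
    rw [hTA1, Finset.mem_sdiff, Finset.mem_range, Finset.mem_range] at hm
    omega
  have bB0 : ∀ i ∈ B, h ≤ s i 0 ∧ s i 0 < 2*h := by
    intro i hi
    have hm : s i 0 ∈ B.image (fun i => s i 0) := Finset.mem_image_of_mem _ hi
    rw [hTB0, Finset.mem_sdiff, Finset.mem_range, Finset.mem_range] at hm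
    omega
  refine ⟨A, B, fun i => s i 0 + 1, fun i => 3*h - s i 1, fun i => 3*h - s i 0,
    fun i => s i 1 + 1, hABdisj, hABunion, haa, hbb, ?_, ?_, ?_, ?_, ?_, ?_⟩
  · apply bijOn_of_image_eq
    · intro x hx y hy hxy
      have hxy' : s x 0 + 1 = s y 0 + 1 := hxy
      exact injA0 hx hy (by show s x 0 = s y 0; omega)
    · rw [show (fun i => s i 0 + 1) = ((fun t => t + 1) ∘ (fun i => s i 0)) from rfl,
        ← Finset.image_image, hTA0]
      ext j
      simp only [Finset.mem_image, Finset.mem_range, Finset.mem_Icc]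
      constructor
      · rintro ⟨k, hk, rfl⟩; omega
      · intro hj; exact ⟨j - 1, by omega, by omega⟩
  · apply bijOn_of_image_eq
    · intro x hx y hy hxy
      have hxy' : 3*h - s x 1 = 3*h - s y 1 := hxy
      have h1x := bA1 x (Finset.mem_coe.mp hx)
      have h1y := bA1 y (Finset.mem_coe.mp hy)
      exact injA1 hx hy (by show s x 1 = s y 1; omega)
    · rw [show (fun i => 3*h - s i 1) = ((fun t => 3*h - t) ∘ (fun i => s i 1)) from rfl,
        ← Finset.image_image, hTA1]
      ext j
      simp only [Finset.mem_image, Finset.mem_sdiff, Finset.mem_range, Finset.mem_Icc]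
      constructor
      · rintro ⟨k, ⟨hk1, hk2⟩, rfl⟩; omega
      · intro hj; exact ⟨3*h - j, ⟨by omega, by omega⟩, by omega⟩
  · apply bijOn_of_image_eq
    · intro x hx y hy hxy
      have hxy' : 3*h - s x 0 = 3*h - s y 0 := hxy
      have h1x := bB0 x (Finset.mem_coe.mp hx)
      have h1y := bB0 y (Finset.mem_coe.mp hy)
      exact injB0 hx hy (by show s x 0 = s y 0; omega)
    · rw [show (fun i => 3*h - s i 0) = ((fun t => 3*h - t) ∘ (fun i => s i 0)) from rfl,
        ← Finset.image_image, hTB0]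
      ext j
      simp only [Finset.mem_image, Finset.mem_sdiff, Finset.mem_range, Finset.mem_Icc]
      constructor
      · rintro ⟨k, ⟨hk1, hk2⟩, rfl⟩; omega
      · intro hj; exact ⟨3*h - j, ⟨by omega, by omega⟩, by omega⟩
  · apply bijOn_of_image_eq
    · intro x hx y hy hxy
      have hxy' : s x 1 + 1 = s y 1 + 1 := hxy
      exact injB1 hx hy (by show s x 1 = s y 1; omega)
    · rw [show (fun i => s i 1 + 1) = ((fun t => t + 1) ∘ (fun i => s i 1)) from rfl,
        ← Finset.image_image, hTB1]
      ext j
      simp only [Finset.mem_image, Finset.mem_range, Finset.mem_Icc]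
      constructor
      · rintro ⟨k, hk, rfl⟩; omega
      · intro hj; exact ⟨j - 1, by omega, by omega⟩
  · intro i hi
    have hp := hpt i (hAsub hi)
    have hlt := memA i hi
    have hb := (bA1 i hi).2
    show s i 0 + 1 + l i + (3*h - s i 1) = e
    omega
  · intro i hi
    have hp := hpt i (hBsub hi)
    have hlt := memB i hi
    have hb := (bB0 i hi).2
    show 3*h - s i 0 + l i + (s i 1 + 1) = e
    omega

end Stmt6Aux

/-- Correctness of the reduction: the PRN3DM instance is a yes-instance iff
there is a feasible schedule for the two-machine unit-time open shop with time
lags `L i = l i + Δ` whose total completion time is at most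
`F = (n/2) * (3n/2 + 1)`. -/
theorem stmt_6 (n e : ℕ) (l : ℕ → ℕ) (hn : 0 < n) (hne : Even n)
    (h1 : n < e) (h2 : e < 3 * n / 2)
    (hsum : ∑ i ∈ Finset.Icc 1 n, l i = n * (e - n - 1)) :
    PRN3DMYes n e l ↔
    ∃ s : ℕ → Fin 2 → ℕ,
      FeasibleSchedule n (fun i => l i + (3 * n / 2 - e)) s ∧
      ∑ i ∈ Finset.Icc 1 n, completionTime s i ≤ n / 2 * (3 * n / 2 + 1) := by
  have hpar : n % 2 = 0 := Nat.even_iff.mp hne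
  obtain ⟨h, rfl⟩ : ∃ h, n = 2 * h := ⟨n / 2, by omega⟩
  have hh : 1 ≤ h := by omega
  have he3 : e < 3 * h := by omega
  have d1 : 2 * h / 2 = h := by omega
  have d2 : 3 * (2 * h) / 2 = 3 * h := by omega
  have dF : 2 * h / 2 * (3 * (2 * h) / 2 + 1) = h * (3 * h + 1) := by rw [d1, d2]
  constructor
  · rintro ⟨A, B, πA, σA, πB, σB, hAB, hUnion, hcA, hcB, hπA, hσA, hπB, hσB, heqA, heqB⟩
    rw [d1] at hcA hcB hπA hσA hπB hσB
    obtain ⟨st, hfeas, hsC⟩ := Stmt6Aux.fwd h e l hh h1 he3 A B πA σA πB σB hAB hUnion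
      hcA hcB hπA hσA hπB hσB heqA heqB
    refine ⟨st, hfeas, ?_⟩
    rw [dF]
    exact hsC
  · rintro ⟨st, hfeas, hsC⟩
    rw [dF] at hsC
    have hsC' : ∑ i ∈ Finset.Icc 1 (2*h), (max (st i 0) (st i 1) + 1) ≤ h * (3*h+1) := hsC
    obtain ⟨A, B, πA, σA, πB, σB, c1, c2, c3, c4, c5, c6, c7, c8, c9, c10⟩ :=
      Stmt6Aux.bwd h e l hh h1 he3 hsum st hfeas.1 hfeas.2 hsC'
    refine ⟨A, B, πA, σA, πB, σB, c1, c2, ?_, ?_, ?_, ?_, ?_, ?_, c9, c10⟩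
    · rw [d1]; exact c3
    · rw [d1]; exact c4
    · rw [d1]; exact c5
    · rw [d1]; exact c6
    · rw [d1]; exact c7
    · rw [d1]; exact c8
end
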